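/- Let P_1, ..., P_T be orthogonal projections on R^d with M = P_T⋯P_1, and suppose n ≥ T ≥ 3 with k = nT. Then (1/T) Σ_{m=1}^{T-1} ||(I − P_m) M^n||² ≤ T²/√k. -/

import Mathlib

open RealInnerProductSpace

/-- The product `P (n-1) * ⋯ * P 0` (so that `P 0` is applied first). -/
noncomputable def prodUpTo (d : ℕ)
    (P : ℕ → (EuclideanSpace ℝ (Fin d) →L[ℝ] EuclideanSpace ℝ (Fin d))) :
    ℕ → (EuclideanSpace ℝ (Fin d) →L[ℝ] EuclideanSpace ℝ (Fin d))
  | 0 => 1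
  | n + 1 => P n * prodUpTo d P n

section Aux

variable {d : ℕ}

local notation "E" => EuclideanSpace ℝ (Fin d)

private lemma le_of_sq_le_sq' {a b : ℝ} (ha : 0 ≤ a) (hb : 0 ≤ b) (h : a ^ 2 ≤ b ^ 2) :
    a ≤ b := by nlinarith

/-- Pythagoras for an orthogonal projection. -/
private lemma proj_pyth (Q : E →L[ℝ] E) (hsa : IsSelfAdjoint Q) (hid : Q * Q = Q) (z : E) :
    ‖z - Q z‖ ^ 2 + ‖Q z‖ ^ 2 = ‖z‖ ^ 2 := by
  have hQQ : Q (Q z) = Q z := by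
    have := congrArg (fun A : E →L[ℝ] E => A z) hid
    simpa using this
  have h0 : (inner ℝ (z - Q z) (Q z) : ℝ) = 0 := by
    have hsym := hsa.isSymmetric
    have h2 : Q (z - Q z) = 0 := by
      rw [map_sub, hQQ, sub_self]
    have h3 : (inner ℝ (Q z) (z - Q z) : ℝ) = 0 := by
      have h4 := hsym z (z - Q z)
      simp only [ContinuousLinearMap.coe_coe] at h4
      rw [h4, h2, inner_zero_right]
    rwa [real_inner_comm] at h3
  have := norm_add_sq_real (z - Q z) (Q z)
  rw [sub_add_cancel, h0] at this
  linarith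

private lemma proj_contract (Q : E →L[ℝ] E) (hsa : IsSelfAdjoint Q) (hid : Q * Q = Q) (z : E) :
    ‖Q z‖ ≤ ‖z‖ := by
  have h := proj_pyth Q hsa hid z
  exact le_of_sq_le_sq' (norm_nonneg _) (norm_nonneg _) (by nlinarith [sq_nonneg ‖z - Q z‖])

private lemma proj_contract' (Q : E →L[ℝ] E) (hsa : IsSelfAdjoint Q) (hid : Q * Q = Q) (z : E) :
    ‖z - Q z‖ ≤ ‖z‖ := by
  have h := proj_pyth Q hsa hid z
  exact le_of_sq_le_sq' (norm_nonneg _) (norm_nonneg _) (by nlinarith [sq_nonneg ‖Q z‖])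

variable {T : ℕ} {P : ℕ → (EuclideanSpace ℝ (Fin d) →L[ℝ] EuclideanSpace ℝ (Fin d))}
  (hsa : ∀ i < T, IsSelfAdjoint (P i)) (hidem : ∀ i < T, P i * P i = P i)

include hsa hidem

/-- Telescoping sum of squared step sizes. -/
private lemma sum_steps_sq (y : E) :
    ∑ i ∈ Finset.range T, ‖prodUpTo d P i y - prodUpTo d P (i + 1) y‖ ^ 2
      = ‖y‖ ^ 2 - ‖prodUpTo d P T y‖ ^ 2 := by
  have h : ∀ i ∈ Finset.range T,
      ‖prodUpTo d P i y - prodUpTo d P (i + 1) y‖ ^ 2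
        = ‖prodUpTo d P i y‖ ^ 2 - ‖prodUpTo d P (i + 1) y‖ ^ 2 := by
    intro i hi
    rw [Finset.mem_range] at hi
    have happ : prodUpTo d P (i + 1) y = P i (prodUpTo d P i y) := rfl
    have := proj_pyth (P i) (hsa i hi) (hidem i hi) (prodUpTo d P i y)
    rw [happ]
    linarith
  rw [Finset.sum_congr rfl h, Finset.sum_range_sub' (fun i => ‖prodUpTo d P i y‖ ^ 2)]
  have : prodUpTo d P 0 y = y := rfl
  rw [this]

private lemma prod_contract : ∀ i ≤ T, ∀ y : E, ‖prodUpTo d P i y‖ ≤ ‖y‖ := by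
  intro i hi
  induction i with
  | zero => intro y; simp [prodUpTo]
  | succ j ih =>
    intro y
    have hj : j < T := hi
    have happ : prodUpTo d P (j + 1) y = P j (prodUpTo d P j y) := rfl
    rw [happ]
    exact le_trans (proj_contract (P j) (hsa j hj) (hidem j hj) _) (ih (le_of_lt hj) y)

/-- The one-cycle energy inequality. -/
private lemma one_cycle (y : E) :
    ‖y - prodUpTo d P T y‖ ^ 2 ≤ (T : ℝ) * (‖y‖ ^ 2 - ‖prodUpTo d P T y‖ ^ 2) := by
  have htri : ‖y - prodUpTo d P T y‖
      ≤ ∑ i ∈ Finset.range T, ‖prodUpTo d P i y - prodUpTo d P (i + 1) y‖ := by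
    have := dist_le_range_sum_dist (fun i => prodUpTo d P i y) T
    simpa [dist_eq_norm, prodUpTo] using this
  have hCS := sq_sum_le_card_mul_sum_sq
    (s := Finset.range T) (f := fun i => ‖prodUpTo d P i y - prodUpTo d P (i + 1) y‖)
  rw [Finset.card_range] at hCS
  have h1 : ‖y - prodUpTo d P T y‖ ^ 2
      ≤ (∑ i ∈ Finset.range T, ‖prodUpTo d P i y - prodUpTo d P (i + 1) y‖) ^ 2 :=
    pow_le_pow_left₀ (norm_nonneg _) htri 2
  calc ‖y - prodUpTo d P T y‖ ^ 2
      ≤ (T : ℝ) * ∑ i ∈ Finset.range T,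
          ‖prodUpTo d P i y - prodUpTo d P (i + 1) y‖ ^ 2 := le_trans h1 hCS
    _ = (T : ℝ) * (‖y‖ ^ 2 - ‖prodUpTo d P T y‖ ^ 2) := by
        rw [sum_steps_sq hsa hidem y]

private lemma pow_apply_succ (y : E) (j : ℕ) :
    (prodUpTo d P T ^ (j + 1)) y = prodUpTo d P T ((prodUpTo d P T ^ j) y) := by
  rw [pow_succ']; rfl

private lemma Mpow_contract : ∀ j : ℕ, ∀ y : E, ‖(prodUpTo d P T ^ j) y‖ ≤ ‖y‖ := by
  intro j
  induction j with
  | zero => intro y; simp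
  | succ i ih =>
    intro y
    rw [pow_apply_succ hsa hidem]
    exact le_trans (prod_contract hsa hidem T le_rfl _) (ih y)

private lemma step_antitone (y : E) :
    Antitone (fun j => ‖(prodUpTo d P T ^ j) y - (prodUpTo d P T ^ (j + 1)) y‖) := by
  apply antitone_nat_of_succ_le
  intro j
  have e1 : (prodUpTo d P T ^ (j + 1)) y - (prodUpTo d P T ^ (j + 1 + 1)) y
      = prodUpTo d P T ((prodUpTo d P T ^ j) y - (prodUpTo d P T ^ (j + 1)) y) := by
    rw [map_sub, ← pow_apply_succ hsa hidem y j, ← pow_apply_succ hsa hidem y (j + 1)]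
  simp only [e1]
  exact prod_contract hsa hidem T le_rfl _

private lemma diff_bound {n : ℕ} (hn : 0 < n) (y : E) :
    ‖(prodUpTo d P T ^ n) y - (prodUpTo d P T ^ (n + 1)) y‖ ^ 2
      ≤ ((T : ℝ) / n) * ‖y‖ ^ 2 := by
  set b : ℕ → ℝ := fun j => ‖(prodUpTo d P T ^ j) y - (prodUpTo d P T ^ (j + 1)) y‖ with hb
  have hstep : ∀ j, b j ^ 2 ≤ (T : ℝ) *
      (‖(prodUpTo d P T ^ j) y‖ ^ 2 - ‖(prodUpTo d P T ^ (j + 1)) y‖ ^ 2) := by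
    intro j
    have := one_cycle hsa hidem ((prodUpTo d P T ^ j) y)
    rw [← pow_apply_succ hsa hidem] at this
    exact this
  have hmono : ∀ j ∈ Finset.range n, b n ^ 2 ≤ b j ^ 2 := by
    intro j hj
    rw [Finset.mem_range] at hj
    have := step_antitone hsa hidem y (le_of_lt hj)
    have hbn : 0 ≤ b n := norm_nonneg _
    nlinarith
  have h1 : (n : ℝ) * b n ^ 2 ≤ ∑ j ∈ Finset.range n, b j ^ 2 := by
    calc (n : ℝ) * b n ^ 2 = ∑ _j ∈ Finset.range n, b n ^ 2 := by
          rw [Finset.sum_const, Finset.card_range, nsmul_eq_mul]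
      _ ≤ ∑ j ∈ Finset.range n, b j ^ 2 := Finset.sum_le_sum hmono
  have h2 : ∑ j ∈ Finset.range n, b j ^ 2 ≤ (T : ℝ) * ‖y‖ ^ 2 := by
    calc ∑ j ∈ Finset.range n, b j ^ 2
        ≤ ∑ j ∈ Finset.range n, (T : ℝ) *
            (‖(prodUpTo d P T ^ j) y‖ ^ 2 - ‖(prodUpTo d P T ^ (j + 1)) y‖ ^ 2) :=
          Finset.sum_le_sum (fun j _ => hstep j)
      _ = (T : ℝ) * (‖(prodUpTo d P T ^ 0) y‖ ^ 2 - ‖(prodUpTo d P T ^ n) y‖ ^ 2) := by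
          rw [← Finset.mul_sum,
            Finset.sum_range_sub' (fun j => ‖(prodUpTo d P T ^ j) y‖ ^ 2)]
      _ ≤ (T : ℝ) * ‖y‖ ^ 2 := by
          have h3 : 0 ≤ ‖(prodUpTo d P T ^ n) y‖ := norm_nonneg _
          have h4 : ((prodUpTo d P T ^ 0) y) = y := by simp
          rw [h4]
          nlinarith [norm_nonneg ((prodUpTo d P T ^ n) y), Nat.cast_nonneg (α := ℝ) T]
  have hn' : (0 : ℝ) < n := by exact_mod_cast hn
  rw [div_mul_eq_mul_div, le_div_iff₀ hn']
  calc b n ^ 2 * n = (n : ℝ) * b n ^ 2 := by ring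
    _ ≤ (T : ℝ) * ‖y‖ ^ 2 := le_trans h1 h2

private lemma gauss_sum (N : ℕ) :
    ∑ m ∈ Finset.range N, ((m : ℝ) + 1) = (N : ℝ) * ((N : ℝ) + 1) / 2 := by
  induction N with
  | zero => simp
  | succ j ih => rw [Finset.sum_range_succ, ih]; push_cast; ring

end Aux

/-- 0-indexed: `P m` for `m ∈ {0,…,T-2}` are the paper's tasks `1,…,T-1`. -/
theorem cyclic_worst_case_dimension_free_bound (d T n k : ℕ)
    (hT : 3 ≤ T) (hn : T ≤ n) (hk : k = n * T)
    (P : ℕ → (EuclideanSpace ℝ (Fin d) →L[ℝ] EuclideanSpace ℝ (Fin d)))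
    (hsa : ∀ i < T, IsSelfAdjoint (P i)) (hidem : ∀ i < T, P i * P i = P i) :
    (1 / (T : ℝ)) * ∑ m ∈ Finset.range (T - 1),
        ‖((1 : EuclideanSpace ℝ (Fin d) →L[ℝ] EuclideanSpace ℝ (Fin d)) - P m)
            * prodUpTo d P T ^ n‖ ^ 2
      ≤ (T : ℝ) ^ 2 / Real.sqrt k := by
  have hT1 : (1 : ℕ) ≤ T := by omega
  have hn0 : 0 < n := by omega
  have hT0 : (0 : ℝ) < T := by positivity
  have hn0' : (0 : ℝ) < n := by exact_mod_cast hn0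
  set M := prodUpTo d P T with hM
  set D : ℝ := Real.sqrt ((T : ℝ) / n) with hD
  have hD0 : 0 ≤ D := Real.sqrt_nonneg _
  -- per-term bound on the squared operator norm
  have hterm : ∀ m ∈ Finset.range (T - 1),
      ‖((1 : EuclideanSpace ℝ (Fin d) →L[ℝ] EuclideanSpace ℝ (Fin d)) - P m) * M ^ n‖ ^ 2
        ≤ 2 * ((m : ℝ) + 1) * D := by
    intro m hm
    rw [Finset.mem_range] at hm
    have hmT : m < T := by omega
    have hm1T : m + 1 ≤ T := by omega
    have hC0 : (0 : ℝ) ≤ 2 * ((m : ℝ) + 1) * D := by positivity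
    -- pointwise bound
    have hpt : ∀ x : EuclideanSpace ℝ (Fin d),
        ‖(((1 : EuclideanSpace ℝ (Fin d) →L[ℝ] EuclideanSpace ℝ (Fin d)) - P m) * M ^ n) x‖ ^ 2
          ≤ (2 * ((m : ℝ) + 1) * D) * ‖x‖ ^ 2 := by
      intro x
      set u : EuclideanSpace ℝ (Fin d) := (M ^ n) x with hu
      have happly :
          (((1 : EuclideanSpace ℝ (Fin d) →L[ℝ] EuclideanSpace ℝ (Fin d)) - P m) * M ^ n) x
            = u - P m u := by
        simp [ContinuousLinearMap.mul_apply, ContinuousLinearMap.sub_apply, hu]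
      rw [happly]
      set a : ℕ → ℝ := fun i => ‖prodUpTo d P i u - prodUpTo d P (i + 1) u‖ with ha
      have ha0 : ∀ i, 0 ≤ a i := fun i => norm_nonneg _
      -- step 1 : triangle inequality
      have h1 : ‖u - P m u‖ ≤ ∑ i ∈ Finset.range (m + 1), a i := by
        set w : EuclideanSpace ℝ (Fin d) := prodUpTo d P m u with hw
        have hsplit : u - P m u = ((u - w) - P m (u - w)) + (w - P m w) := by
          rw [map_sub]; abel
        have h1a : ‖u - P m u‖ ≤ ‖(u - w) - P m (u - w)‖ + ‖w - P m w‖ := by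
          rw [hsplit]; exact norm_add_le _ _
        have h1b : ‖(u - w) - P m (u - w)‖ ≤ ‖u - w‖ :=
          proj_contract' (P m) (hsa m hmT) (hidem m hmT) _
        have h1c : ‖u - w‖ ≤ ∑ i ∈ Finset.range m, a i := by
          have := dist_le_range_sum_dist (fun i => prodUpTo d P i u) m
          simpa [dist_eq_norm, ha, hw, prodUpTo] using this
        have h1d : ‖w - P m w‖ = a m := rfl
        rw [Finset.sum_range_succ]
        calc ‖u - P m u‖ ≤ ‖(u - w) - P m (u - w)‖ + ‖w - P m w‖ := h1a
          _ ≤ (∑ i ∈ Finset.range m, a i) + a m := by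
              rw [h1d]; exact add_le_add (le_trans h1b h1c) le_rfl
      -- step 2 : Cauchy-Schwarz
      have h2 : (∑ i ∈ Finset.range (m + 1), a i) ^ 2
          ≤ ((m : ℝ) + 1) * ∑ i ∈ Finset.range (m + 1), a i ^ 2 := by
        have := sq_sum_le_card_mul_sum_sq (s := Finset.range (m + 1)) (f := a)
        rw [Finset.card_range] at this
        exact_mod_cast this
      -- step 3 : extend the sum and telescope
      have h3 : ∑ i ∈ Finset.range (m + 1), a i ^ 2 ≤ ‖u‖ ^ 2 - ‖M u‖ ^ 2 := by
        calc ∑ i ∈ Finset.range (m + 1), a i ^ 2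
            ≤ ∑ i ∈ Finset.range T, a i ^ 2 :=
              Finset.sum_le_sum_of_subset_of_nonneg
                (Finset.range_mono hm1T) (fun i _ _ => sq_nonneg _)
          _ = ‖u‖ ^ 2 - ‖M u‖ ^ 2 := sum_steps_sq hsa hidem u
      -- step 4 : difference of squares
      have h4u : ‖u‖ ≤ ‖x‖ := Mpow_contract hsa hidem n x
      have h4m : ‖M u‖ ≤ ‖u‖ := prod_contract hsa hidem T le_rfl u
      have h4d : ‖u‖ - ‖M u‖ ≤ ‖u - M u‖ := norm_sub_norm_le _ _
      have h5 : ‖u - M u‖ ≤ D * ‖x‖ := by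
        have hMu : M u = (M ^ (n + 1)) x := by
          rw [hu, ← pow_apply_succ hsa hidem]
        have := diff_bound hsa hidem hn0 x
        rw [← hu, ← hMu] at this
        refine le_of_sq_le_sq' (norm_nonneg _) (by positivity) ?_
        calc ‖u - M u‖ ^ 2 ≤ ((T : ℝ) / n) * ‖x‖ ^ 2 := this
          _ = (D * ‖x‖) ^ 2 := by
              rw [mul_pow, hD, Real.sq_sqrt (by positivity)]
      have h6 : ‖u‖ ^ 2 - ‖M u‖ ^ 2 ≤ 2 * ‖x‖ * (D * ‖x‖) := by
        nlinarith [norm_nonneg u, norm_nonneg (M u), norm_nonneg x, norm_nonneg (u - M u)]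
      have h7 : ‖u - P m u‖ ^ 2 ≤ (∑ i ∈ Finset.range (m + 1), a i) ^ 2 :=
        pow_le_pow_left₀ (norm_nonneg _) h1 2
      have hmpos : (0 : ℝ) ≤ (m : ℝ) + 1 := by positivity
      calc ‖u - P m u‖ ^ 2
          ≤ ((m : ℝ) + 1) * ∑ i ∈ Finset.range (m + 1), a i ^ 2 := le_trans h7 h2
        _ ≤ ((m : ℝ) + 1) * (2 * ‖x‖ * (D * ‖x‖)) := by
            exact mul_le_mul_of_nonneg_left (le_trans h3 h6) hmpos
        _ = (2 * ((m : ℝ) + 1) * D) * ‖x‖ ^ 2 := by ring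
    -- from the pointwise bound to the operator norm
    have hop : ‖((1 : EuclideanSpace ℝ (Fin d) →L[ℝ] EuclideanSpace ℝ (Fin d)) - P m) * M ^ n‖
        ≤ Real.sqrt (2 * ((m : ℝ) + 1) * D) := by
      refine ContinuousLinearMap.opNorm_le_bound _ (Real.sqrt_nonneg _) ?_
      intro x
      refine le_of_sq_le_sq' (norm_nonneg _) (by positivity) ?_
      calc ‖(((1 : EuclideanSpace ℝ (Fin d) →L[ℝ] EuclideanSpace ℝ (Fin d)) - P m) * M ^ n) x‖ ^ 2
          ≤ (2 * ((m : ℝ) + 1) * D) * ‖x‖ ^ 2 := hpt x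
        _ = (Real.sqrt (2 * ((m : ℝ) + 1) * D) * ‖x‖) ^ 2 := by
            rw [mul_pow, Real.sq_sqrt hC0]
    calc ‖((1 : EuclideanSpace ℝ (Fin d) →L[ℝ] EuclideanSpace ℝ (Fin d)) - P m) * M ^ n‖ ^ 2
        ≤ Real.sqrt (2 * ((m : ℝ) + 1) * D) ^ 2 := pow_le_pow_left₀ (norm_nonneg _) hop 2
      _ = 2 * ((m : ℝ) + 1) * D := Real.sq_sqrt hC0
  -- sum the bounds
  have hsum : ∑ m ∈ Finset.range (T - 1),
      ‖((1 : EuclideanSpace ℝ (Fin d) →L[ℝ] EuclideanSpace ℝ (Fin d)) - P m) * M ^ n‖ ^ 2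
        ≤ ((T : ℝ) - 1) * (T : ℝ) * D := by
    have hcast : ((T - 1 : ℕ) : ℝ) = (T : ℝ) - 1 := by
      rw [Nat.cast_sub hT1]; norm_num
    calc ∑ m ∈ Finset.range (T - 1),
        ‖((1 : EuclideanSpace ℝ (Fin d) →L[ℝ] EuclideanSpace ℝ (Fin d)) - P m) * M ^ n‖ ^ 2
        ≤ ∑ m ∈ Finset.range (T - 1), 2 * ((m : ℝ) + 1) * D := Finset.sum_le_sum hterm
      _ = 2 * D * ∑ m ∈ Finset.range (T - 1), ((m : ℝ) + 1) := by
          rw [Finset.mul_sum]; exact Finset.sum_congr rfl (fun m _ => by ring)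
      _ = 2 * D * (((T - 1 : ℕ) : ℝ) * (((T - 1 : ℕ) : ℝ) + 1) / 2) := by
          rw [gauss_sum hsa hidem]
      _ = ((T : ℝ) - 1) * (T : ℝ) * D := by rw [hcast]; ring
  -- final arithmetic
  have hmain : (1 / (T : ℝ)) * (((T : ℝ) - 1) * (T : ℝ) * D) ≤ (T : ℝ) ^ 2 / Real.sqrt k := by
    have hk' : ((k : ℕ) : ℝ) = (n : ℝ) * (T : ℝ) := by rw [hk]; push_cast; ring
    have hsqrtk : Real.sqrt k = Real.sqrt n * Real.sqrt T := by
      rw [hk', Real.sqrt_mul (le_of_lt hn0')]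
    have hDdiv : D = Real.sqrt T / Real.sqrt n := by
      rw [hD, Real.sqrt_div (by positivity : (0 : ℝ) ≤ (T : ℝ))]
    have hsT : Real.sqrt (T : ℝ) ^ 2 = (T : ℝ) := Real.sq_sqrt (by positivity)
    have hsT0 : 0 < Real.sqrt (T : ℝ) := Real.sqrt_pos.2 hT0
    have hsn0 : 0 < Real.sqrt (n : ℝ) := Real.sqrt_pos.2 hn0'
    rw [hsqrtk, hDdiv]
    have hTne : (T : ℝ) ≠ 0 := ne_of_gt hT0
    have hsnne : Real.sqrt (n : ℝ) ≠ 0 := ne_of_gt hsn0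
    rw [show (1 / (T : ℝ)) * (((T : ℝ) - 1) * (T : ℝ) * (Real.sqrt T / Real.sqrt n))
        = (((T : ℝ) - 1) * Real.sqrt T) / Real.sqrt n from by field_simp]
    rw [div_le_div_iff₀ hsn0 (by positivity)]
    have hT3 : (3 : ℝ) ≤ (T : ℝ) := by exact_mod_cast hT
    have e : ((T : ℝ) - 1) * Real.sqrt (T : ℝ) * (Real.sqrt (n : ℝ) * Real.sqrt (T : ℝ))
        = ((T : ℝ) - 1) * (T : ℝ) * Real.sqrt (n : ℝ) := by
      rw [show ((T : ℝ) - 1) * Real.sqrt (T : ℝ) * (Real.sqrt (n : ℝ) * Real.sqrt (T : ℝ))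
          = ((T : ℝ) - 1) * (Real.sqrt (T : ℝ) * Real.sqrt (T : ℝ)) * Real.sqrt (n : ℝ) from by
            ring,
        Real.mul_self_sqrt (by positivity)]
    rw [e]
    nlinarith [hsn0.le, hT3, mul_nonneg hT0.le hsn0.le]
  calc (1 / (T : ℝ)) * ∑ m ∈ Finset.range (T - 1),
      ‖((1 : EuclideanSpace ℝ (Fin d) →L[ℝ] EuclideanSpace ℝ (Fin d)) - P m)
          * prodUpTo d P T ^ n‖ ^ 2
      ≤ (1 / (T : ℝ)) * (((T : ℝ) - 1) * (T : ℝ) * D) := by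
        exact mul_le_mul_of_nonneg_left hsum (by positivity)
    _ ≤ (T : ℝ) ^ 2 / Real.sqrt k := hmain
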